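/- Given a nonzero vector n in a three-dimensional real vector space with rotation group D, the set of vectors perpendicular to n is a two-dimensional linear subspace (a plane), and there exists exactly one rotation r_n ∈ D with r_n n = n and r_n u = -u for all u ⊥ n. -/

import Mathlib

/-- The ray (half-line) spanned by `v`: all nonnegative multiples of `v`. -/
def Ray' {V : Type*} [AddCommGroup V] [Module ℝ V] (v : V) : Set V :=
  {x | ∃ c : ℝ, 0 ≤ c ∧ x = c • v}

/-- The half-plane `ℝ v + ℝ≥0 w`. -/
def HalfPlane {V : Type*} [AddCommGroup V] [Module ℝ V] (v w : V) : Set V :=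
  {x | ∃ a b : ℝ, 0 ≤ b ∧ x = a • v + b • w}

/-- `D` is a rotation group: for any two pairs of (half-plane, ray on its boundary)
there is exactly one element of `D` mapping the first pair to the second. -/
def IsRotationGroup {V : Type*} [AddCommGroup V] [Module ℝ V]
    (D : Subgroup (V ≃ₗ[ℝ] V)) : Prop :=
  ∀ v w v' w' : V, LinearIndependent ℝ ![v, w] → LinearIndependent ℝ ![v', w'] →
    ∃! d : V ≃ₗ[ℝ] V, d ∈ D ∧
      (d : V ≃ₗ[ℝ] V) '' HalfPlane v w = HalfPlane v' w' ∧
      (d : V ≃ₗ[ℝ] V) '' Ray' v = Ray' v'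

/-- `w ⊥ v` : some rotation sends `w` to `-w` and fixes `v`. -/
def Perp {V : Type*} [AddCommGroup V] [Module ℝ V]
    (D : Subgroup (V ≃ₗ[ℝ] V)) (w v : V) : Prop :=
  ∃ r ∈ D, r w = -w ∧ r v = v

section Aux
variable {V : Type*} [AddCommGroup V] [Module ℝ V]

lemma image_halfPlane (d : V ≃ₗ[ℝ] V) (v w : V) :
    (d : V ≃ₗ[ℝ] V) '' HalfPlane v w = HalfPlane (d v) (d w) := by
  ext x
  constructor
  · rintro ⟨y, ⟨a, b, hb, rfl⟩, rfl⟩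
    exact ⟨a, b, hb, by simp⟩
  · rintro ⟨a, b, hb, rfl⟩
    exact ⟨a • v + b • w, ⟨a, b, hb, rfl⟩, by simp⟩

lemma image_ray (d : V ≃ₗ[ℝ] V) (v : V) :
    (d : V ≃ₗ[ℝ] V) '' Ray' v = Ray' (d v) := by
  ext x
  constructor
  · rintro ⟨y, ⟨c, hc, rfl⟩, rfl⟩
    exact ⟨c, hc, by simp⟩
  · rintro ⟨c, hc, rfl⟩
    exact ⟨c • v, ⟨c, hc, rfl⟩, by simp⟩

lemma one_image (S : Set V) : ((1 : V ≃ₗ[ℝ] V) : V ≃ₗ[ℝ] V) '' S = S := by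
  simp

lemma halfPlane_subset (v w : V) {a b : ℝ} (hb : 0 ≤ b) :
    HalfPlane v (a • v + b • w) ⊆ HalfPlane v w := by
  rintro x ⟨p, q, hq, rfl⟩
  exact ⟨p + q * a, q * b, mul_nonneg hq hb, by module⟩

lemma halfPlane_congr (v w : V) (a : ℝ) {b : ℝ} (hb : 0 < b) :
    HalfPlane v (a • v + b • w) = HalfPlane v w := by
  apply Set.Subset.antisymm (halfPlane_subset v w hb.le)
  have h : w = (-a/b) • v + (1/b) • (a • v + b • w) := by
    rw [smul_add, smul_smul, smul_smul]
    field_simp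
    module
  nth_rewrite 1 [h]
  exact halfPlane_subset v _ (by positivity)

lemma halfPlane_smul_left (v w : V) {c : ℝ} (hc : c ≠ 0) :
    HalfPlane (c • v) w = HalfPlane v w := by
  ext x
  constructor
  · rintro ⟨p, q, hq, rfl⟩
    exact ⟨p * c, q, hq, by module⟩
  · rintro ⟨p, q, hq, rfl⟩
    refine ⟨p / c, q, hq, ?_⟩
    rw [smul_smul]
    field_simp

lemma li_pair {n x : V} (hn : n ≠ 0) (hx : x ∉ Submodule.span ℝ {n}) :
    LinearIndependent ℝ ![n, x] := by
  rw [LinearIndependent.pair_iff]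
  intro s t hst
  rcases eq_or_ne t 0 with h | h
  · subst h
    simp only [zero_smul, add_zero, smul_eq_zero] at hst
    exact ⟨hst.resolve_right hn, rfl⟩
  · exfalso
    apply hx
    rw [Submodule.mem_span_singleton]
    refine ⟨-s / t, ?_⟩
    have : x = (-s/t) • n := by
      have hx' : t • x = (-s) • n := by
        have h2 : t • x = -(s • n) := by
          rw [eq_neg_iff_add_eq_zero, add_comm]; exact hst
        rw [h2]; module
      calc x = (1/t) • (t • x) := by rw [smul_smul]; field_simp; rw [one_smul]
      _ = (1/t) • ((-s) • n) := by rw [hx']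
      _ = (-s/t) • n := by rw [smul_smul]; ring_nf
    exact this.symm

lemma notmem_span_of_li {n x : V} (h : LinearIndependent ℝ ![n, x]) :
    x ∉ Submodule.span ℝ {n} := by
  intro hx
  rw [Submodule.mem_span_singleton] at hx
  obtain ⟨t, ht⟩ := hx
  have := (LinearIndependent.pair_iff.mp h) t (-1) (by rw [ht]; module)
  simpa using this.2

lemma li_neg {n x : V} (hn : n ≠ 0) (h : LinearIndependent ℝ ![n, x]) :
    LinearIndependent ℝ ![n, -x] := by
  apply li_pair hn
  intro hx
  exact notmem_span_of_li h (by simpa using Submodule.neg_mem _ hx)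

lemma eq_zero_of_eq_neg' {V : Type*} [AddCommGroup V] [Module ℝ V] {x : V}
    (h : x = -x) : x = 0 := by
  have h2 : x + x = 0 := neg_eq_iff_add_eq_zero.mp h.symm
  have h3 : (2 : ℝ) • x = 0 := by rw [two_smul]; exact h2
  exact (smul_eq_zero.mp h3).resolve_left (by norm_num)

lemma fix_flag {D : Subgroup (V ≃ₗ[ℝ] V)} (hD : IsRotationGroup D)
    {s : V ≃ₗ[ℝ] V} (hs : s ∈ D) {v w : V} (h : LinearIndependent ℝ ![v, w])
    (hv : s v = v) (hw : s w = w) : s = 1 := by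
  exact (hD v w v w h h).unique
    ⟨hs, by rw [image_halfPlane, hv, hw], by rw [image_ray, hv]⟩
    ⟨D.one_mem, by simp, by simp⟩

end Aux

theorem stmt6 {V : Type*} [AddCommGroup V] [Module ℝ V]
    (hdim : Module.finrank ℝ V = 3)
    (D : Subgroup (V ≃ₗ[ℝ] V)) (hD : IsRotationGroup D)
    (n : V) (hn : n ≠ 0) :
    (∃ E : Submodule ℝ V, Module.finrank ℝ E = 2 ∧
      ∀ u : V, u ∈ E ↔ Perp D u n) ∧
    (∃! r : V ≃ₗ[ℝ] V, r ∈ D ∧ r n = n ∧ ∀ u : V, Perp D u n → r u = -u) := by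
  have hfin : FiniteDimensional ℝ V :=
    FiniteDimensional.of_finrank_pos (by rw [hdim]; norm_num)
  -- pick e linearly independent from n
  obtain ⟨e, he⟩ : ∃ e, e ∉ Submodule.span ℝ {n} := by
    by_contra h
    push_neg at h
    have htop : Submodule.span ℝ {n} = ⊤ := Submodule.eq_top_iff'.mpr h
    have h1 : Module.finrank ℝ (Submodule.span ℝ {n}) = 1 := finrank_span_singleton hn
    rw [htop, finrank_top] at h1
    omega
  have hne : LinearIndependent ℝ ![n, e] := li_pair hn he
  have hne' : LinearIndependent ℝ ![n, -e] := li_neg hn hne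
  obtain ⟨r, ⟨hrD, hrH, hrR⟩, hruniq⟩ := hD n e n (-e) hne hne'
  -- r n = c • n with c > 0
  obtain ⟨c, hc0, hcn⟩ : ∃ c : ℝ, 0 ≤ c ∧ r n = c • n := by
    have : r n ∈ Ray' n := by
      rw [← hrR]
      exact ⟨n, ⟨1, zero_le_one, (one_smul ℝ n).symm⟩, rfl⟩
    exact this
  have hcpos : 0 < c := by
    rcases hc0.lt_or_eq with h | h
    · exact h
    · exfalso
      apply hn
      have : r n = 0 := by rw [hcn, ← h, zero_smul]
      exact (map_eq_zero_iff r r.injective).mp this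
  -- r e = a • n + b • (-e), b > 0
  obtain ⟨a, b, hb0, hre⟩ : ∃ a b : ℝ, 0 ≤ b ∧ r e = a • n + b • (-e) := by
    have : r e ∈ HalfPlane n (-e) := by
      rw [← hrH]
      exact ⟨e, ⟨0, 1, zero_le_one, by module⟩, rfl⟩
    exact this
  have hbpos : 0 < b := by
    rcases hb0.lt_or_eq with h | h
    · exact h
    · exfalso
      apply he
      rw [Submodule.mem_span_singleton]
      refine ⟨a / c, ?_⟩
      apply r.injective
      rw [map_smul, hcn, smul_smul, hre, ← h]
      rw [div_mul_cancel₀ _ (ne_of_gt hcpos)]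
      module
  -- r ∘ r fixes the flag (n, e), hence r * r = 1
  have hmulapp : ∀ (s t : V ≃ₗ[ℝ] V) (x : V), (s * t) x = s (t x) := fun _ _ _ => rfl
  have hr2 : r * r = 1 := by
    have himg : ∀ S : Set V, ((r * r : V ≃ₗ[ℝ] V) : V ≃ₗ[ℝ] V) '' S
        = (r : V ≃ₗ[ℝ] V) '' ((r : V ≃ₗ[ℝ] V) '' S) := by
      intro S
      rw [← Set.image_comp]
      rfl
    apply (hD n e n e hne hne).unique
    · refine ⟨D.mul_mem hrD hrD, ?_, ?_⟩
      · rw [himg, hrH, image_halfPlane, hcn]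
        have hneg : r (-e) = (-a) • n + b • e := by rw [map_neg, hre]; module
        rw [hneg, halfPlane_smul_left _ _ (ne_of_gt hcpos), halfPlane_congr n e (-a) hbpos]
      · rw [himg, hrR, hrR]
    · exact ⟨D.one_mem, by simp, by simp⟩
  have hinv : ∀ x : V, r (r x) = x := by
    intro x
    have := DFunLike.congr_fun hr2 x
    rwa [hmulapp] at this
  -- c = 1
  have hrn : r n = n := by
    have h1 : (c * c) • n = n := by
      have := hinv n
      rwa [hcn, map_smul, hcn, smul_smul] at this
    have hc1 : c * c = 1 := by
      by_contra hcc
      apply hn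
      have : (c * c - 1) • n = 0 := by rw [sub_smul, h1, one_smul, sub_self]
      rcases smul_eq_zero.mp this with h | h
      · exact absurd (by linarith [sub_eq_zero.mp (by linarith [h] : c*c-1 = (0:ℝ))]) hcc
      · exact h
    have : c = 1 := by nlinarith
    rw [hcn, this, one_smul]
  -- b = 1
  have hre1 : r e = a • n - e := by
    have h1 : r (r e) = e := hinv e
    rw [hre] at h1
    have h2 : (a * (1 - b)) • n + (b * b - 1) • e = 0 := by
      rw [map_add, map_smul, map_smul, map_neg, hrn, hre] at h1
      have h0 : (a * (1 - b)) • n + (b * b - 1) • e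
          = a • n + b • -(a • n + b • -e) - e := by module
      rw [h0, h1, sub_self]
    obtain ⟨h3, h4⟩ := LinearIndependent.pair_iff.mp hne _ _ h2
    have hb1 : b = 1 := by nlinarith
    rw [hre, hb1]; module
  -- r ≠ 1
  have hrne1 : r ≠ 1 := by
    intro h
    rw [h] at hrH
    simp only [one_image] at hrH
    have he1 : e ∈ HalfPlane n (-e) := by
      rw [← hrH]; exact ⟨0, 1, zero_le_one, by module⟩
    obtain ⟨p, q, hq, hpq⟩ := he1
    have h2 : p • n + (-(1 + q)) • e = 0 := by
      have h0 : p • n + (-(1 + q)) • e = (p • n + q • -e) - e := by module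
      rw [h0, ← hpq, sub_self]
    obtain ⟨_, h4⟩ := LinearIndependent.pair_iff.mp hne _ _ h2
    linarith
  -- fixed vectors of nontrivial rotations fixing n lie on the axis
  have hfix : ∀ {s : V ≃ₗ[ℝ] V}, s ∈ D → s n = n → s ≠ 1 →
      ∀ x, s x = x → x ∈ Submodule.span ℝ {n} := by
    intro s hs hsn hs1 x hx
    by_contra hxs
    exact hs1 (fix_flag hD hs (li_pair hn hxs) hsn hx)
  -- key uniqueness: any s ∈ D fixing n and negating some vector indep of n equals r
  have huniq : ∀ (s : V ≃ₗ[ℝ] V), s ∈ D → s n = n → ∀ u : V,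
      LinearIndependent ℝ ![n, u] → s u = -u → s = r := by
    intro s hs hsn u hliu hsu
    have hu0 : u ≠ 0 := by
      intro h
      have := LinearIndependent.pair_iff.mp hliu 0 1 (by rw [h]; module)
      simpa using this.2
    have hs1 : s ≠ 1 := by
      intro h
      rw [h] at hsu
      simp only [LinearEquiv.coe_one] at hsu
      have : u = -u := by simpa using hsu
      exact hu0 (eq_zero_of_eq_neg' this)
    have hs2 : s * s = 1 := by
      apply fix_flag hD (D.mul_mem hs hs) hliu
      · rw [hmulapp, hsn, hsn]
      · rw [hmulapp, hsu, map_neg, hsu, neg_neg]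
    have hsinv : ∀ x : V, s (s x) = x := by
      intro x
      have := DFunLike.congr_fun hs2 x
      rwa [hmulapp] at this
    obtain ⟨t, ht⟩ : ∃ t : ℝ, (1/2 : ℝ) • (e + s e) = t • n := by
      have hq : s ((1/2 : ℝ) • (e + s e)) = (1/2 : ℝ) • (e + s e) := by
        rw [map_smul, map_add, hsinv]; module
      have hmem := hfix hs hsn hs1 _ hq
      rw [Submodule.mem_span_singleton] at hmem
      obtain ⟨t, ht⟩ := hmem
      exact ⟨t, ht.symm⟩
    have hse : s e = (2 * t) • n + (1 : ℝ) • (-e) := by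
      have h1 : e + s e = (2 * t) • n := by
        have h2 := congrArg (fun y : V => (2 : ℝ) • y) ht
        simp only [smul_smul] at h2
        norm_num at h2
        rw [← h2]
      have : s e = (2 * t) • n - e := by rw [← h1]; module
      rw [this]; module
    apply hruniq
    refine ⟨hs, ?_, ?_⟩
    · rw [image_halfPlane, hsn, hse, halfPlane_congr n (-e) (2*t) one_pos]
    · rw [image_ray, hsn]
  -- the plane E
  set E : Submodule ℝ V := LinearMap.ker ((r : V →ₗ[ℝ] V) + LinearMap.id) with hE
  have hEmem : ∀ x, x ∈ E ↔ r x = -x := by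
    intro x
    rw [hE, LinearMap.mem_ker, LinearMap.add_apply, LinearMap.id_apply,
      add_eq_zero_iff_eq_neg]
    rfl
  have hPerp : ∀ u, u ∈ E ↔ Perp D u n := by
    intro u
    constructor
    · intro hu
      exact ⟨r, hrD, (hEmem u).mp hu, hrn⟩
    · rintro ⟨s, hs, hsu, hsn⟩
      rw [hEmem]
      by_cases hu0 : u ∈ Submodule.span ℝ {n}
      · obtain ⟨t, rfl⟩ := Submodule.mem_span_singleton.mp hu0
        have h1 : t • n = -(t • n) := by
          rw [← hsu, map_smul, hsn]
        have hz : t • n = 0 := eq_zero_of_eq_neg' h1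
        rw [hz, map_zero, neg_zero]
      · have hs' := huniq s hs hsn u (li_pair hn hu0) hsu
        rw [← hs']
        exact hsu
  have hcompl : IsCompl (Submodule.span ℝ {n}) E := by
    constructor
    · rw [disjoint_iff]
      rw [Submodule.eq_bot_iff]
      rintro x ⟨hx1, hx2⟩
      obtain ⟨t, rfl⟩ := Submodule.mem_span_singleton.mp hx1
      have h1 : t • n = -(t • n) := by
        rw [← (hEmem _).mp hx2, map_smul, hrn]
      exact eq_zero_of_eq_neg' h1
    · rw [codisjoint_iff, Submodule.eq_top_iff']
      intro x
      have hx : x = (1/2 : ℝ) • (x + r x) + (1/2 : ℝ) • (x - r x) := by module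
      have ha : (1/2 : ℝ) • (x + r x) ∈ Submodule.span ℝ {n} := by
        apply hfix hrD hrn hrne1
        rw [map_smul, map_add, hinv]; module
      have hb : (1/2 : ℝ) • (x - r x) ∈ E := by
        rw [hEmem, map_smul, map_sub, hinv]; module
      rw [hx]
      exact Submodule.add_mem_sup ha hb
  have hfinE : Module.finrank ℝ E = 2 := by
    have h1 := Submodule.finrank_add_eq_of_isCompl hcompl
    rw [finrank_span_singleton hn, hdim] at h1
    omega
  -- assemble
  constructor
  · exact ⟨E, hfinE, hPerp⟩
  · refine ⟨r, ⟨hrD, hrn, ?_⟩, ?_⟩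
    · intro u hu
      exact (hEmem u).mp ((hPerp u).mpr hu)
    · rintro s ⟨hs, hsn, hsprop⟩
      have hu₀ : r (e - (a/2) • n) = -(e - (a/2) • n) := by
        rw [map_sub, hre1, map_smul, hrn]; module
      have hli : LinearIndependent ℝ ![n, e - (a/2) • n] := by
        apply li_pair hn
        intro hmem
        apply he
        have h1 := Submodule.add_mem _ hmem
          (Submodule.smul_mem _ (a/2) (Submodule.mem_span_singleton_self n))
        simpa using h1
      exact huniq s hs hsn _ hli (hsprop _ ⟨r, hrD, hu₀, hrn⟩)
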